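/- Let G = (V,E) be a directed graph, let S, T ⊆ V be nonempty, and let t > 0. Let S^L denote the copy of S in V^L and T^R the copy of T in V^R in the node-weighted undirected bipartite graph G_t. Then ρ_G(S,T) ≥ ρ_{G_t}(S^L ∪ T^R). -/
import Mathlib


open scoped Classical

/-- Directed density `ρ_G(S,T) = |E(S,T)|/√(|S|·|T|)`, where `E` is the edge set of a
directed graph on `Fin n` and `E(S,T) = {(u,v) ∈ E : u ∈ S, v ∈ T}`. -/
noncomputable def rhoDir {n : ℕ} (E : Finset (Fin n × Fin n))
    (S T : Finset (Fin n)) : ℝ :=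
  ((E.filter fun p => p.1 ∈ S ∧ p.2 ∈ T).card : ℝ) /
    Real.sqrt ((S.card : ℝ) * (T.card : ℝ))

/-- The number of edges of the bipartite graph `G_t` (one undirected edge `{u^L, v^R}`
for each directed edge `(u,v) ∈ E`) with both endpoints in `U ⊆ V^L ⊔ V^R`. -/
noncomputable def gtEdges {n : ℕ} (E : Finset (Fin n × Fin n))
    (U : Finset (Fin n ⊕ Fin n)) : ℕ :=
  (E.filter fun p => Sum.inl p.1 ∈ U ∧ Sum.inr p.2 ∈ U).card

/-- The total node weight of `U ⊆ V^L ⊔ V^R` in `G_t`: vertices of `V^L` have weight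
`1/(2t)` and vertices of `V^R` have weight `t/2`. -/
noncomputable def gtWeight {n : ℕ} (t : ℝ) (U : Finset (Fin n ⊕ Fin n)) : ℝ :=
  ∑ z ∈ U, Sum.elim (fun _ => 1 / (2 * t)) (fun _ => t / 2) z

/-- The node-weighted density of `U` in the bipartite graph `G_t`. -/
noncomputable def rhoGt {n : ℕ} (E : Finset (Fin n × Fin n)) (t : ℝ)
    (U : Finset (Fin n ⊕ Fin n)) : ℝ :=
  (gtEdges E U : ℝ) / gtWeight t U

/-- **The reduction of Sawlani and Wang, first direction.** For any nonempty
`S, T ⊆ V` and any `t > 0`, the directed density of `(S,T)` in `G` is at least the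
node-weighted density of `S^L ∪ T^R` in `G_t`. -/
theorem directed_density_ge_reduction {n : ℕ} (E : Finset (Fin n × Fin n))
    (S T : Finset (Fin n)) (hS : S.Nonempty) (hT : T.Nonempty)
    (t : ℝ) (ht : 0 < t) :
    rhoGt E t
        (S.map ⟨Sum.inl, Sum.inl_injective⟩ ∪ T.map ⟨Sum.inr, Sum.inr_injective⟩) ≤
      rhoDir E S T := by
  set U := S.map ⟨Sum.inl, Sum.inl_injective⟩ ∪ T.map ⟨Sum.inr, Sum.inr_injective⟩ with hU
  have hmem : ∀ p : Fin n × Fin n, ((Sum.inl p.1 ∈ U ∧ Sum.inr p.2 ∈ U) ↔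
      (p.1 ∈ S ∧ p.2 ∈ T)) := by
    intro p
    simp [hU, Finset.mem_union]
  have hedges : gtEdges E U = (E.filter fun p => p.1 ∈ S ∧ p.2 ∈ T).card := by
    unfold gtEdges
    congr 1
    apply Finset.filter_congr
    intro p _
    simpa using hmem p
  have hdisj : Disjoint (S.map ⟨Sum.inl, Sum.inl_injective⟩)
      (T.map ⟨Sum.inr, Sum.inr_injective⟩) := by
    simp [Finset.disjoint_left]
  have hweight : gtWeight t U = (S.card : ℝ) * (1 / (2 * t)) + (T.card : ℝ) * (t / 2) := by
    unfold gtWeight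
    rw [hU, Finset.sum_union hdisj, Finset.sum_map, Finset.sum_map]
    simp [mul_comm]
  set a : ℝ := (S.card : ℝ)
  set b : ℝ := (T.card : ℝ)
  have ha : 0 < a := by simp only [a]; exact_mod_cast Finset.card_pos.mpr hS
  have hb : 0 < b := by simp only [b]; exact_mod_cast Finset.card_pos.mpr hT
  have hW : 0 < gtWeight t U := by
    rw [hweight]
    positivity
  have hsqrt : Real.sqrt (a * b) ≤ gtWeight t U := by
    rw [hweight]
    have h1 : Real.sqrt (a * b) ≤ Real.sqrt ((a * (1 / (2 * t)) + b * (t / 2)) ^ 2) := by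
      apply Real.sqrt_le_sqrt
      have key : a * b = 4 * (a * (1 / (2 * t)) * (b * (t / 2))) := by
        field_simp; ring
      nlinarith [sq_nonneg (a * (1 / (2 * t)) - b * (t / 2))]
    rwa [Real.sqrt_sq (by positivity)] at h1
  unfold rhoGt rhoDir
  rw [hedges]
  exact div_le_div_of_nonneg_left (by positivity) (by positivity) hsqrt
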